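/- Let g be a nondegenerate symmetric bilinear form on V, dim V = n ≥ 4, with null vectors u, u' satisfying g(u,u') = 1. Suppose σ is a symmetric bilinear form such that g(u,·) ∧ σ(v,·) = g(v,·) ∧ σ(u,·) for all v ∈ u⊥, and σu = c u for a scalar c. Then tr_g σ = (4 − n) c. -/
import Mathlib

open LinearMap

lemma trace_smulRight'' {V : Type*} [AddCommGroup V] [Module ℝ V] [FiniteDimensional ℝ V]
    (f : V →ₗ[ℝ] ℝ) (v : V) : LinearMap.trace ℝ V (f.smulRight v) = f v := by
  have h : f.smulRight v = dualTensorHom ℝ V V (f ⊗ₜ v) := by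
    ext x; simp [dualTensorHom_apply]
  rw [h, trace_eq_contract_apply, contractLeft_apply]

theorem stmt_16 {V : Type*} [AddCommGroup V] [Module ℝ V] [FiniteDimensional ℝ V]
    (n : ℕ) (hn : 4 ≤ n) (hdim : Module.finrank ℝ V = n)
    (g : V →ₗ[ℝ] V →ₗ[ℝ] ℝ)
    (hgsym : ∀ x y, g x y = g y x)
    (hgnd : ∀ x, (∀ y, g x y = 0) → x = 0)
    (u u' : V) (hunull : g u u = 0) (hu'null : g u' u' = 0) (huu' : g u u' = 1)
    (σ : V →ₗ[ℝ] V →ₗ[ℝ] ℝ) (hσsym : ∀ x y, σ x y = σ y x)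
    (c : ℝ) (hσu : ∀ w, σ u w = c * g u w)
    (hwedge : ∀ v, g u v = 0 → ∀ x y,
      g u x * σ v y - g u y * σ v x = g v x * σ u y - g v y * σ u x) :
    ∀ S : V →ₗ[ℝ] V, (∀ x y, g (S x) y = σ x y) →
      LinearMap.trace ℝ V S = (4 - (n : ℝ)) * c := by
  intro S hS
  -- key lemma
  have hkey : ∀ v, g u v = 0 → ∀ y,
      σ v y = σ v u' * g u y + c * g v u' * g u y - c * g v y := by
    intro v hv y
    have h := hwedge v hv u' y
    rw [hσu y, hσu u', huu'] at h
    linarith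
  -- projection
  set φ1 : V →ₗ[ℝ] ℝ := g.flip u' with hφ1
  set φ2 : V →ₗ[ℝ] ℝ := g.flip u with hφ2
  set π : V →ₗ[ℝ] V := LinearMap.id - φ1.smulRight u - φ2.smulRight u' with hπ
  have hπapp : ∀ x, π x = x - g x u' • u - g x u • u' := by
    intro x; simp [hπ, hφ1, hφ2]
  have hπu : ∀ x, g u (π x) = 0 := by
    intro x
    rw [hπapp]
    simp only [map_sub, map_smul, smul_eq_mul]
    rw [hunull, huu', hgsym u x]
    ring
  set φ3 : V →ₗ[ℝ] ℝ := (σ.flip u').comp π with hφ3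
  set R : V →ₗ[ℝ] V :=
    ((2*c) • φ1).smulRight u + φ2.smulRight (S u') + φ3.smulRight u
      + (c • φ2).smulRight u' - c • LinearMap.id with hR
  have hSR : S = R := by
    ext x
    have hxy : ∀ y, g (S x - R x) y = 0 := by
      intro y
      have h1 : g (S x) y = σ x y := hS x y
      have h2 : g (R x) y = (2*c) * g x u' * g u y + g x u * σ u' y
          + σ (π x) u' * g u y + c * g x u * g u' y - c * g x y := by
        simp only [hR, hφ1, hφ2, hφ3, LinearMap.sub_apply, LinearMap.add_apply,
          LinearMap.smulRight_apply, LinearMap.smul_apply, LinearMap.comp_apply,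
          LinearMap.flip_apply, LinearMap.id_apply, map_add, map_sub, map_smul,
          smul_eq_mul]
        rw [hS u' y]
        try ring
      -- decompose σ x y
      have hx : x = g x u' • u + g x u • u' + π x := by
        rw [hπapp]; abel
      have hπu' : g (π x) u' = 0 := by
        rw [hπapp]
        simp only [map_sub, map_smul, LinearMap.sub_apply, LinearMap.smul_apply, smul_eq_mul]
        rw [huu', hu'null]
        ring
      have hπy : g (π x) y = g x y - g x u' * g u y - g x u * g u' y := by
        rw [hπapp]
        simp only [map_sub, map_smul, LinearMap.sub_apply, LinearMap.smul_apply, smul_eq_mul]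
      have hσx : σ x y = g x u' * σ u y + g x u * σ u' y + σ (π x) y := by
        conv_lhs => rw [hx]
        simp only [map_add, map_smul, LinearMap.add_apply, LinearMap.smul_apply, smul_eq_mul]
      rw [map_sub, LinearMap.sub_apply, h1, h2, hσx, hσu y,
        hkey (π x) (hπu x) y, hπu', hπy]
      ring
    have := hgnd _ hxy
    have h0 : S x - R x = 0 := this
    have : S x = R x := by rwa [sub_eq_zero] at h0
    simpa using this
  rw [hSR]
  simp only [hR, map_sub, map_add, map_smul, trace_smulRight'', LinearMap.trace_id,
    hdim, smul_eq_mul]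
  have e1 : ((2*c) • φ1) u = 2*c := by
    simp only [hφ1, LinearMap.smul_apply, LinearMap.flip_apply, smul_eq_mul]
    rw [huu']; ring
  have e2 : φ2 (S u') = c := by
    rw [hφ2]
    simp only [LinearMap.flip_apply]
    rw [hS u' u, hσsym u' u, hσu u', huu', mul_one]
  have e3 : φ3 u = 0 := by
    have : π u = 0 := by
      rw [hπapp]
      rw [huu', hunull]
      simp
    simp [hφ3, this]
  have e4 : (c • φ2) u' = c := by
    simp only [hφ2, LinearMap.smul_apply, LinearMap.flip_apply, smul_eq_mul]
    rw [hgsym u' u, huu']; ring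
  rw [e1, e2, e3, e4]
  ring
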